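/- Let M be a matroid with ground set E, x ∈ E neither a loop nor a coloop, N = M \ x and M' = M / x. Let w : E \ {x} → ℝ_{≥0} be weights and let I be a maximum-weight independent set of N with unique circuit C of I ∪ {x} in M (which contains x). If |C| ≥ 3 then the maximum weight of an independent set in M' is at least w(I)/2. -/

import Mathlib

/-- Let `x` be neither a loop nor a coloop of a matroid `M` on ground set `E`, and let `I`
be a maximum-weight independent set of the deletion `M \ x` for nonnegative weights `w`.
Suppose `C ⊆ I ∪ {x}` is the circuit of `I ∪ {x}` in `M` (a minimal dependent set)
containing `x`, and `|C| ≥ 3`.  Then there is an independent set of the contraction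
`M / x` (i.e. a set `J` with `x ∉ J` and `J ∪ {x}` independent in `M`) of weight at least
`w(I)/2`. -/
theorem stmt_13 {α : Type*} [Fintype α] (M : Matroid α) (hE : M.E = Set.univ)
    (x : α) (hnotloop : M.Indep {x}) (hnotcoloop : ∃ B : Set α, M.IsBase B ∧ x ∉ B)
    (w : α → ℝ) (hw : ∀ a, 0 ≤ w a)
    (I : Finset α) (hxI : x ∉ I) (hI : M.Indep ↑I)
    (hImax : ∀ J : Finset α, x ∉ J → M.Indep ↑J → ∑ e ∈ J, w e ≤ ∑ e ∈ I, w e)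
    (C : Finset α) (hxC : x ∈ C) (hCI : ↑C ⊆ insert x (↑I : Set α))
    (hCdep : ¬ M.Indep ↑C) (hCmin : ∀ D : Finset α, D ⊂ C → M.Indep ↑D)
    (hC3 : 3 ≤ C.card) :
    ∃ J : Finset α, x ∉ J ∧ M.Indep (insert x (↑J : Set α)) ∧
      (∑ e ∈ I, w e) / 2 ≤ ∑ e ∈ J, w e := by
  classical
  -- C.erase x is nonempty (in fact has ≥ 2 elements), contained in I
  have hCxI : (C.erase x : Set α) ⊆ (I : Set α) := by
    intro a ha
    simp only [Finset.coe_erase, Set.mem_diff, Set.mem_singleton_iff] at ha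
    have := hCI ha.1
    rcases this with h | h
    · exact absurd h ha.2
    · exact h
  have hCxI' : C.erase x ⊆ I := by
    intro a ha; exact_mod_cast hCxI (by exact_mod_cast ha)
  have hcard : 2 ≤ (C.erase x).card := by
    have := Finset.card_erase_of_mem hxC
    omega
  have hne : (C.erase x).Nonempty := Finset.card_pos.mp (by omega)
  -- choose y of minimal weight in C.erase x
  obtain ⟨y, hyC, hymin⟩ := Finset.exists_min_image (C.erase x) w hne
  have hyI : y ∈ I := hCxI' hyC
  have hyx : y ≠ x := (Finset.mem_erase.mp hyC).1
  -- key claim: insert x ↑(I.erase y) is independent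
  have hkey : M.Indep (insert x (↑(I.erase y) : Set α)) := by
    set S : Set α := insert x (↑(I.erase y) : Set α) with hS
    -- C \ {y} is independent and contained in S
    have hCy : M.Indep ↑(C.erase y) := hCmin _ (Finset.erase_ssubset (Finset.mem_of_mem_erase hyC))
    have hCyS : (↑(C.erase y) : Set α) ⊆ S := by
      intro a ha
      simp only [Finset.coe_erase, Set.mem_diff, Set.mem_singleton_iff] at ha
      rcases hCI ha.1 with h | h
      · exact h ▸ Set.mem_insert _ _
      · exact Set.mem_insert_of_mem _ (by
          simp only [Finset.coe_erase, Set.mem_diff, Set.mem_singleton_iff]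
          exact ⟨h, ha.2⟩)
    obtain ⟨B, hB, hCB⟩ := hCy.subset_isBasis_of_subset hCyS (by rw [hE]; exact Set.subset_univ _)
    -- If B were smaller than I, augment from I; the only possible new element is y,
    -- but then C ⊆ insert y B would be independent, contradiction.
    have hSfin : S.Finite := (Set.finite_singleton x).union (I.erase y).finite_toSet |>.subset
      (by rw [hS, Set.insert_eq])
    have hScard : S.encard = (I.card : ℕ∞) := by
      rw [hS, Set.encard_insert_of_notMem (by
        simp only [Finset.coe_erase, Set.mem_diff, Finset.mem_coe]
        intro h; exact hxI h.1)]
      have : 0 < I.card := Finset.card_pos.mpr ⟨y, hyI⟩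
      have hIc : I.card = (I.erase y).card + 1 := by
        rw [Finset.card_erase_of_mem hyI]; omega
      rw [Set.encard_coe_eq_coe_finsetCard, hIc, Nat.cast_add, Nat.cast_one]
    have hBge : (I.card : ℕ∞) ≤ B.encard := by
      by_contra hlt
      push_neg at hlt
      have := hB.indep.augment hI (by rwa [Set.encard_coe_eq_coe_finsetCard])
      obtain ⟨e, heI, hind⟩ := this
      by_cases hey : e = y
      · apply hCdep
        apply hind.subset
        intro a ha
        by_cases hay : a = y
        · exact (hey ▸ hay) ▸ Set.mem_insert _ _
        · exact Set.mem_insert_of_mem _ (hCB (by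
            simp only [Finset.coe_erase, Set.mem_diff, Set.mem_singleton_iff]
            exact ⟨ha, hay⟩))
      · have heS : e ∈ S := Set.mem_insert_of_mem _ (by
          simp only [Finset.coe_erase, Set.mem_diff, Set.mem_singleton_iff, Finset.mem_coe]
          exact ⟨heI.1, hey⟩)
        exact heI.2 (hB.mem_of_insert_indep heS hind)
    -- hence B = S and S is independent
    have hBS : B = S := hSfin.eq_of_subset_of_encard_le' hB.subset (hScard ▸ hBge)
    exact hBS ▸ hB.indep
  refine ⟨I.erase y, fun h ↦ hxI (Finset.mem_of_mem_erase h), hkey, ?_⟩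
  -- weight bound: 2 * w y ≤ ∑ over C.erase x ≤ ∑ over I
  have h2y : 2 * w y ≤ ∑ e ∈ C.erase x, w e := by
    obtain ⟨z, hz, hzy⟩ : ∃ z ∈ C.erase x, z ≠ y := by
      by_contra h
      push_neg at h
      have : C.erase x ⊆ {y} := fun a ha => Finset.mem_singleton.mpr (h a ha)
      have := Finset.card_le_card this
      simp at this
      omega
    calc 2 * w y = w y + w y := by ring
    _ ≤ w z + w y := by linarith [hymin z hz]
    _ = ∑ e ∈ {z, y}, w e := by rw [Finset.sum_pair hzy]
    _ ≤ ∑ e ∈ C.erase x, w e := Finset.sum_le_sum_of_subset_of_nonneg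
        (by intro a ha; rcases Finset.mem_insert.mp ha with h | h
            · exact h ▸ hz
            · exact (Finset.mem_singleton.mp h) ▸ hyC)
        (fun a _ _ => hw a)
  have hsub : ∑ e ∈ C.erase x, w e ≤ ∑ e ∈ I, w e :=
    Finset.sum_le_sum_of_subset_of_nonneg hCxI' (fun a _ _ => hw a)
  have herase : ∑ e ∈ I.erase y, w e = (∑ e ∈ I, w e) - w y := by
    rw [← Finset.add_sum_erase I w hyI]; ring
  rw [herase]
  linarith
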